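/- Let a, b, c, d, N, x₀, y₀, z₀, w₀ be elements of a commutative ring with N² = a·b·c·d and a·x₀⁴ + b·y₀⁴ + c·z₀⁴ + d·w₀⁴ = 0. Define x₁, y₁, z₁, w₁ by the endomorphism formulas: x₁ = x₀((3bc·y₀⁴z₀⁴ + ad·x₀⁴w₀⁴)(a·x₀⁴ + d·w₀⁴) + 4N·x₀²y₀²z₀²w₀²(b·y₀⁴ − c·z₀⁴)), and similarly y₁, z₁, w₁ as displayed. Then a·x₁⁴ + b·y₁⁴ + c·z₁⁴ + d·w₁⁴ = 0. -/
import Mathlib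


set_option maxHeartbeats 4000000 in
/-- The endomorphism formulas map the diagonal quartic surface `V_{a,b,c,d}` to itself:
a polynomial identity in any commutative ring. -/
theorem stmt_18 {R : Type*} [CommRing R] (a b c d N x₀ y₀ z₀ w₀ x₁ y₁ z₁ w₁ : R)
    (hN : N ^ 2 = a * b * c * d)
    (h : a * x₀ ^ 4 + b * y₀ ^ 4 + c * z₀ ^ 4 + d * w₀ ^ 4 = 0)
    (hx₁ : x₁ = x₀ * ((3 * b * c * y₀ ^ 4 * z₀ ^ 4 + a * d * x₀ ^ 4 * w₀ ^ 4) *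
        (a * x₀ ^ 4 + d * w₀ ^ 4) +
      4 * N * x₀ ^ 2 * y₀ ^ 2 * z₀ ^ 2 * w₀ ^ 2 * (b * y₀ ^ 4 - c * z₀ ^ 4)))
    (hy₁ : y₁ = y₀ * ((3 * a * c * x₀ ^ 4 * z₀ ^ 4 + b * d * y₀ ^ 4 * w₀ ^ 4) *
        (b * y₀ ^ 4 + d * w₀ ^ 4) +
      4 * N * x₀ ^ 2 * y₀ ^ 2 * z₀ ^ 2 * w₀ ^ 2 * (c * z₀ ^ 4 - a * x₀ ^ 4)))
    (hz₁ : z₁ = z₀ * ((3 * a * b * x₀ ^ 4 * y₀ ^ 4 + c * d * z₀ ^ 4 * w₀ ^ 4) *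
        (c * z₀ ^ 4 + d * w₀ ^ 4) +
      4 * N * x₀ ^ 2 * y₀ ^ 2 * z₀ ^ 2 * w₀ ^ 2 * (a * x₀ ^ 4 - b * y₀ ^ 4)))
    (hw₁ : w₁ = w₀ * (c * d * z₀ ^ 4 * w₀ ^ 4 * (c * z₀ ^ 4 + d * w₀ ^ 4) -
      a * b * x₀ ^ 4 * y₀ ^ 4 * (9 * c * z₀ ^ 4 + d * w₀ ^ 4))) :
    a * x₁ ^ 4 + b * y₁ ^ 4 + c * z₁ ^ 4 + d * w₁ ^ 4 = 0 := by
  subst hx₁ hy₁ hz₁ hw₁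
  linear_combination (norm := ring) ((256)*b*c^4*N^2*x₀^8*y₀^12*z₀^24*w₀^8 + (256)*b^2*c^3*d^2*N*x₀^6*y₀^14*z₀^18*w₀^14 + (96)*b^2*c^3*d^4*x₀^4*y₀^12*z₀^16*w₀^20 + (192)*b^2*c^4*d^3*x₀^4*y₀^12*z₀^20*w₀^16 + (96)*b^2*c^5*d^2*x₀^4*y₀^12*z₀^24*w₀^12 + (-256)*b^3*c^2*d^2*N*x₀^6*y₀^18*z₀^14*w₀^14 + (96)*b^3*c^2*d^4*x₀^4*y₀^16*z₀^12*w₀^20 + (256)*b^4*c*N^2*x₀^8*y₀^24*z₀^12*w₀^8 + (192)*b^4*c^2*d^3*x₀^4*y₀^20*z₀^12*w₀^16 + (96)*b^5*c^2*d^2*x₀^4*y₀^24*z₀^12*w₀^12 + (256)*a*c^4*N^2*x₀^12*y₀^8*z₀^24*w₀^8 + (-2048)*a*b*c^3*N^2*x₀^12*y₀^12*z₀^20*w₀^8 + (-192)*a*b*c^3*d^4*x₀^8*y₀^8*z₀^16*w₀^20 + (-384)*a*b*c^4*d^3*x₀^8*y₀^8*z₀^20*w₀^16 + (-192)*a*b*c^5*d^2*x₀^8*y₀^8*z₀^24*w₀^12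 + (1536)*a*b^2*c^2*N^2*x₀^12*y₀^16*z₀^16*w₀^8 + (3072)*a*b^2*c^3*d*N*x₀^10*y₀^14*z₀^18*w₀^10 + (576)*a*b^2*c^3*d^3*x₀^8*y₀^12*z₀^16*w₀^16 + (768)*a*b^2*c^4*N*x₀^10*y₀^14*z₀^22*w₀^6 + (864)*a*b^2*c^4*d^2*x₀^8*y₀^12*z₀^20*w₀^12 + (256)*a*b^2*c^5*d*x₀^8*y₀^12*z₀^24*w₀^8 + (-2048)*a*b^3*c*N^2*x₀^12*y₀^20*z₀^12*w₀^8 + (-192)*a*b^3*c*d^4*x₀^8*y₀^16*z₀^8*w₀^20 + (-3072)*a*b^3*c^2*d*N*x₀^10*y₀^18*z₀^14*w₀^10 + (576)*a*b^3*c^2*d^3*x₀^8*y₀^16*z₀^12*w₀^16 + (576)*a*b^3*c^3*d^2*x₀^8*y₀^16*z₀^16*w₀^12 + (576)*a*b^3*c^4*d*x₀^8*y₀^16*z₀^20*w₀^8 + (256)*a*b^4*N^2*x₀^12*y₀^24*z₀^8*w₀^8 + (-384)*a*b^4*c*d^3*x₀^8*y₀^20*z₀^8*w₀^16 + (-768)*a*b^4*c^2*N*x₀^10*y₀^22*z₀^14*w₀^6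 + (864)*a*b^4*c^2*d^2*x₀^8*y₀^20*z₀^12*w₀^12 + (576)*a*b^4*c^3*d*x₀^8*y₀^20*z₀^16*w₀^8 + (-192)*a*b^5*c*d^2*x₀^8*y₀^24*z₀^8*w₀^12 + (256)*a*b^5*c^2*d*x₀^8*y₀^24*z₀^12*w₀^8 + (-256)*a^2*c^3*d^2*N*x₀^14*y₀^6*z₀^18*w₀^14 + (96)*a^2*c^3*d^4*x₀^12*y₀^4*z₀^16*w₀^20 + (192)*a^2*c^4*d^3*x₀^12*y₀^4*z₀^20*w₀^16 + (96)*a^2*c^5*d^2*x₀^12*y₀^4*z₀^24*w₀^12 + (1536)*a^2*b*c^2*N^2*x₀^16*y₀^12*z₀^16*w₀^8 + (-3072)*a^2*b*c^3*d*N*x₀^14*y₀^10*z₀^18*w₀^10 + (576)*a^2*b*c^3*d^3*x₀^12*y₀^8*z₀^16*w₀^16 + (-768)*a^2*b*c^4*N*x₀^14*y₀^10*z₀^22*w₀^6 + (864)*a^2*b*c^4*d^2*x₀^12*y₀^8*z₀^20*w₀^12 + (256)*a^2*b*c^5*d*x₀^12*y₀^8*z₀^24*w₀^8 + (1536)*a^2*b^2*c*N^2*x₀^16*y₀^16*z₀^12*w₀^8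 + (-3456)*a^2*b^2*c^2*d^3*x₀^12*y₀^12*z₀^12*w₀^16 + (-2304)*a^2*b^2*c^3*d^2*x₀^12*y₀^12*z₀^16*w₀^12 + (256)*a^2*b^2*c^4*d*x₀^12*y₀^12*z₀^20*w₀^8 + (256)*a^2*b^3*d^2*N*x₀^14*y₀^18*z₀^6*w₀^14 + (96)*a^2*b^3*d^4*x₀^12*y₀^16*z₀^4*w₀^20 + (3072)*a^2*b^3*c*d*N*x₀^14*y₀^18*z₀^10*w₀^10 + (576)*a^2*b^3*c*d^3*x₀^12*y₀^16*z₀^8*w₀^16 + (-2304)*a^2*b^3*c^2*d^2*x₀^12*y₀^16*z₀^12*w₀^12 + (-1920)*a^2*b^3*c^3*d*x₀^12*y₀^16*z₀^16*w₀^8 + (864)*a^2*b^3*c^4*x₀^12*y₀^16*z₀^20*w₀^4 + (192)*a^2*b^4*d^3*x₀^12*y₀^20*z₀^4*w₀^16 + (768)*a^2*b^4*c*N*x₀^14*y₀^22*z₀^10*w₀^6 + (864)*a^2*b^4*c*d^2*x₀^12*y₀^20*z₀^8*w₀^12 + (256)*a^2*b^4*c^2*d*x₀^12*y₀^20*z₀^12*w₀^8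 + (864)*a^2*b^4*c^3*x₀^12*y₀^20*z₀^16*w₀^4 + (96)*a^2*b^5*d^2*x₀^12*y₀^24*z₀^4*w₀^12 + (256)*a^2*b^5*c*d*x₀^12*y₀^24*z₀^8*w₀^8 + (256)*a^3*c^2*d^2*N*x₀^18*y₀^6*z₀^14*w₀^14 + (96)*a^3*c^2*d^4*x₀^16*y₀^4*z₀^12*w₀^20 + (-2048)*a^3*b*c*N^2*x₀^20*y₀^12*z₀^12*w₀^8 + (-192)*a^3*b*c*d^4*x₀^16*y₀^8*z₀^8*w₀^20 + (3072)*a^3*b*c^2*d*N*x₀^18*y₀^10*z₀^14*w₀^10 + (576)*a^3*b*c^2*d^3*x₀^16*y₀^8*z₀^12*w₀^16 + (576)*a^3*b*c^3*d^2*x₀^16*y₀^8*z₀^16*w₀^12 + (576)*a^3*b*c^4*d*x₀^16*y₀^8*z₀^20*w₀^8 + (-256)*a^3*b^2*d^2*N*x₀^18*y₀^14*z₀^6*w₀^14 + (96)*a^3*b^2*d^4*x₀^16*y₀^12*z₀^4*w₀^20 + (-3072)*a^3*b^2*c*d*N*x₀^18*y₀^14*z₀^10*w₀^10 + (576)*a^3*b^2*c*d^3*x₀^16*y₀^12*z₀^8*w₀^16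 + (-2304)*a^3*b^2*c^2*d^2*x₀^16*y₀^12*z₀^12*w₀^12 + (-1920)*a^3*b^2*c^3*d*x₀^16*y₀^12*z₀^16*w₀^8 + (864)*a^3*b^2*c^4*x₀^16*y₀^12*z₀^20*w₀^4 + (576)*a^3*b^3*c*d^2*x₀^16*y₀^16*z₀^8*w₀^12 + (-1920)*a^3*b^3*c^2*d*x₀^16*y₀^16*z₀^12*w₀^8 + (-5184)*a^3*b^3*c^3*x₀^16*y₀^16*z₀^16*w₀^4 + (576)*a^3*b^4*c*d*x₀^16*y₀^20*z₀^8*w₀^8 + (864)*a^3*b^4*c^2*x₀^16*y₀^20*z₀^12*w₀^4 + (256)*a^4*c*N^2*x₀^24*y₀^8*z₀^12*w₀^8 + (192)*a^4*c^2*d^3*x₀^20*y₀^4*z₀^12*w₀^16 + (256)*a^4*b*N^2*x₀^24*y₀^12*z₀^8*w₀^8 + (-384)*a^4*b*c*d^3*x₀^20*y₀^8*z₀^8*w₀^16 + (768)*a^4*b*c^2*N*x₀^22*y₀^10*z₀^14*w₀^6 + (864)*a^4*b*c^2*d^2*x₀^20*y₀^8*z₀^12*w₀^12 + (576)*a^4*b*c^3*d*x₀^20*y₀^8*z₀^16*w₀^8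 + (192)*a^4*b^2*d^3*x₀^20*y₀^12*z₀^4*w₀^16 + (-768)*a^4*b^2*c*N*x₀^22*y₀^14*z₀^10*w₀^6 + (864)*a^4*b^2*c*d^2*x₀^20*y₀^12*z₀^8*w₀^12 + (256)*a^4*b^2*c^2*d*x₀^20*y₀^12*z₀^12*w₀^8 + (864)*a^4*b^2*c^3*x₀^20*y₀^12*z₀^16*w₀^4 + (576)*a^4*b^3*c*d*x₀^20*y₀^16*z₀^8*w₀^8 + (864)*a^4*b^3*c^2*x₀^20*y₀^16*z₀^12*w₀^4 + (96)*a^5*c^2*d^2*x₀^24*y₀^4*z₀^12*w₀^12 + (-192)*a^5*b*c*d^2*x₀^24*y₀^8*z₀^8*w₀^12 + (256)*a^5*b*c^2*d*x₀^24*y₀^8*z₀^12*w₀^8 + (96)*a^5*b^2*d^2*x₀^24*y₀^12*z₀^4*w₀^12 + (256)*a^5*b^2*c*d*x₀^24*y₀^12*z₀^8*w₀^8) * hN + (c^4*d^8*z₀^16*w₀^32 + (4)*c^5*d^7*z₀^20*w₀^28 + (6)*c^6*d^6*z₀^24*w₀^24 + (4)*c^7*d^5*z₀^28*w₀^20 +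 c^8*d^4*z₀^32*w₀^16 + (-16)*b*c^4*d^5*N*x₀^2*y₀^6*z₀^18*w₀^22 + (-1)*b*c^4*d^7*y₀^4*z₀^16*w₀^28 + (-32)*b*c^5*d^4*N*x₀^2*y₀^6*z₀^22*w₀^18 + (-3)*b*c^5*d^6*y₀^4*z₀^20*w₀^24 + (-16)*b*c^6*d^3*N*x₀^2*y₀^6*z₀^26*w₀^14 + (-3)*b*c^6*d^5*y₀^4*z₀^24*w₀^20 + (-1)*b*c^7*d^4*y₀^4*z₀^28*w₀^16 + (16)*b^2*c^4*d^4*N*x₀^2*y₀^10*z₀^18*w₀^18 + b^2*c^4*d^6*y₀^8*z₀^16*w₀^24 + (16)*b^2*c^5*d^3*N*x₀^2*y₀^10*z₀^22*w₀^14 + (2)*b^2*c^5*d^5*y₀^8*z₀^20*w₀^20 + b^2*c^6*d^4*y₀^8*z₀^24*w₀^16 + (-16)*b^3*c^4*d^3*N*x₀^2*y₀^14*z₀^18*w₀^14 + (-1)*b^3*c^4*d^5*y₀^12*z₀^16*w₀^20 + (-1)*b^3*c^5*d^4*y₀^12*z₀^20*w₀^16 + (16)*b^4*c*d^5*N*x₀^2*y₀^18*z₀^6*w₀^22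 + (-16)*b^4*c^2*d^4*N*x₀^2*y₀^18*z₀^10*w₀^18 + (16)*b^4*c^3*d^3*N*x₀^2*y₀^18*z₀^14*w₀^14 + b^4*c^4*d^4*y₀^16*z₀^16*w₀^16 + b^5*d^7*y₀^20*w₀^28 + (32)*b^5*c*d^4*N*x₀^2*y₀^22*z₀^6*w₀^18 + (-1)*b^5*c*d^6*y₀^20*z₀^4*w₀^24 + (-16)*b^5*c^2*d^3*N*x₀^2*y₀^22*z₀^10*w₀^14 + b^5*c^2*d^5*y₀^20*z₀^8*w₀^20 + (-1)*b^5*c^3*d^4*y₀^20*z₀^12*w₀^16 + (3)*b^6*d^6*y₀^24*w₀^24 + (16)*b^6*c*d^3*N*x₀^2*y₀^26*z₀^6*w₀^14 + (-2)*b^6*c*d^5*y₀^24*z₀^4*w₀^20 + b^6*c^2*d^4*y₀^24*z₀^8*w₀^16 + (3)*b^7*d^5*y₀^28*w₀^20 + (-1)*b^7*c*d^4*y₀^28*z₀^4*w₀^16 + b^8*d^4*y₀^32*w₀^16 + (16)*a*c^4*d^5*N*x₀^6*y₀^2*z₀^18*w₀^22 + (-1)*a*c^4*d^7*x₀^4*z₀^16*w₀^28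 + (32)*a*c^5*d^4*N*x₀^6*y₀^2*z₀^22*w₀^18 + (-3)*a*c^5*d^6*x₀^4*z₀^20*w₀^24 + (16)*a*c^6*d^3*N*x₀^6*y₀^2*z₀^26*w₀^14 + (-3)*a*c^6*d^5*x₀^4*z₀^24*w₀^20 + (-1)*a*c^7*d^4*x₀^4*z₀^28*w₀^16 + (-4)*a*b*c^3*d^7*x₀^4*y₀^4*z₀^12*w₀^28 + (-30)*a*b*c^4*d^6*x₀^4*y₀^4*z₀^16*w₀^24 + (-36)*a*b*c^5*d^5*x₀^4*y₀^4*z₀^20*w₀^20 + (2)*a*b*c^6*d^4*x₀^4*y₀^4*z₀^24*w₀^16 + (12)*a*b*c^7*d^3*x₀^4*y₀^4*z₀^28*w₀^12 + (-144)*a*b^2*c^3*d^4*N*x₀^6*y₀^10*z₀^14*w₀^18 + (4)*a*b^2*c^3*d^6*x₀^4*y₀^8*z₀^12*w₀^24 + (-304)*a*b^2*c^4*d^3*N*x₀^6*y₀^10*z₀^18*w₀^14 + (25)*a*b^2*c^4*d^5*x₀^4*y₀^8*z₀^16*w₀^20 + (-144)*a*b^2*c^5*d^2*N*x₀^6*y₀^10*z₀^22*w₀^10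 + (9)*a*b^2*c^5*d^4*x₀^4*y₀^8*z₀^20*w₀^16 + (-12)*a*b^2*c^6*d^3*x₀^4*y₀^8*z₀^24*w₀^12 + (144)*a*b^3*c^2*d^4*N*x₀^6*y₀^14*z₀^10*w₀^18 + (-4)*a*b^3*c^3*d^5*x₀^4*y₀^12*z₀^12*w₀^20 + (144)*a*b^3*c^4*d^2*N*x₀^6*y₀^14*z₀^18*w₀^10 + (76)*a*b^3*c^4*d^4*x₀^4*y₀^12*z₀^16*w₀^16 + (108)*a*b^3*c^5*d^3*x₀^4*y₀^12*z₀^20*w₀^12 + (-16)*a*b^4*d^5*N*x₀^6*y₀^18*z₀^2*w₀^22 + (12)*a*b^4*c*d^6*x₀^4*y₀^16*z₀^4*w₀^24 + (304)*a*b^4*c^2*d^3*N*x₀^6*y₀^18*z₀^10*w₀^14 + (-12)*a*b^4*c^2*d^5*x₀^4*y₀^16*z₀^8*w₀^20 + (-144)*a*b^4*c^3*d^2*N*x₀^6*y₀^18*z₀^14*w₀^10 + (112)*a*b^4*c^3*d^4*x₀^4*y₀^16*z₀^12*w₀^16 + (-108)*a*b^4*c^4*d^3*x₀^4*y₀^16*z₀^16*w₀^12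 + (-32)*a*b^5*d^4*N*x₀^6*y₀^22*z₀^2*w₀^18 + (-1)*a*b^5*d^6*x₀^4*y₀^20*w₀^24 + (38)*a*b^5*c*d^5*x₀^4*y₀^20*z₀^4*w₀^20 + (144)*a*b^5*c^2*d^2*N*x₀^6*y₀^22*z₀^10*w₀^10 + (-27)*a*b^5*c^2*d^4*x₀^4*y₀^20*z₀^8*w₀^16 + (108)*a*b^5*c^3*d^3*x₀^4*y₀^20*z₀^12*w₀^12 + (-16)*a*b^6*d^3*N*x₀^6*y₀^26*z₀^2*w₀^14 + (-2)*a*b^6*d^5*x₀^4*y₀^24*w₀^20 + (38)*a*b^6*c*d^4*x₀^4*y₀^24*z₀^4*w₀^16 + (-12)*a*b^6*c^2*d^3*x₀^4*y₀^24*z₀^8*w₀^12 + (-1)*a*b^7*d^4*x₀^4*y₀^28*w₀^16 + (12)*a*b^7*c*d^3*x₀^4*y₀^28*z₀^4*w₀^12 + (-16)*a^2*c^4*d^4*N*x₀^10*y₀^2*z₀^18*w₀^18 + a^2*c^4*d^6*x₀^8*z₀^16*w₀^24 + (-16)*a^2*c^5*d^3*N*x₀^10*y₀^2*z₀^22*w₀^14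 + (2)*a^2*c^5*d^5*x₀^8*z₀^20*w₀^20 + a^2*c^6*d^4*x₀^8*z₀^24*w₀^16 + (144)*a^2*b*c^3*d^4*N*x₀^10*y₀^6*z₀^14*w₀^18 + (4)*a^2*b*c^3*d^6*x₀^8*y₀^4*z₀^12*w₀^24 + (304)*a^2*b*c^4*d^3*N*x₀^10*y₀^6*z₀^18*w₀^14 + (25)*a^2*b*c^4*d^5*x₀^8*y₀^4*z₀^16*w₀^20 + (144)*a^2*b*c^5*d^2*N*x₀^10*y₀^6*z₀^22*w₀^10 + (9)*a^2*b*c^5*d^4*x₀^8*y₀^4*z₀^20*w₀^16 + (-12)*a^2*b*c^6*d^3*x₀^8*y₀^4*z₀^24*w₀^12 + (6)*a^2*b^2*c^2*d^6*x₀^8*y₀^8*z₀^8*w₀^24 + (160)*a^2*b^2*c^3*d^5*x₀^8*y₀^8*z₀^12*w₀^20 + (522)*a^2*b^2*c^4*d^4*x₀^8*y₀^8*z₀^16*w₀^16 + (480)*a^2*b^2*c^5*d^3*x₀^8*y₀^8*z₀^20*w₀^12 + (54)*a^2*b^2*c^6*d^2*x₀^8*y₀^8*z₀^24*w₀^8 +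 (-144)*a^2*b^3*c*d^4*N*x₀^10*y₀^14*z₀^6*w₀^18 + (48)*a^2*b^3*c^2*d^5*x₀^8*y₀^12*z₀^8*w₀^20 + (-96)*a^2*b^3*c^3*d^4*x₀^8*y₀^12*z₀^12*w₀^16 + (336)*a^2*b^3*c^4*d*N*x₀^10*y₀^14*z₀^18*w₀^6 + (74)*a^2*b^3*c^4*d^3*x₀^8*y₀^12*z₀^16*w₀^12 + (202)*a^2*b^3*c^5*d^2*x₀^8*y₀^12*z₀^20*w₀^8 + (16)*a^2*b^4*d^4*N*x₀^10*y₀^18*z₀^2*w₀^18 + (-304)*a^2*b^4*c*d^3*N*x₀^10*y₀^18*z₀^6*w₀^14 + (-12)*a^2*b^4*c*d^5*x₀^8*y₀^16*z₀^4*w₀^20 + (-336)*a^2*b^4*c^3*d*N*x₀^10*y₀^18*z₀^14*w₀^6 + (560)*a^2*b^4*c^3*d^3*x₀^8*y₀^16*z₀^12*w₀^12 + (374)*a^2*b^4*c^4*d^2*x₀^8*y₀^16*z₀^16*w₀^8 + (16)*a^2*b^5*d^3*N*x₀^10*y₀^22*z₀^2*w₀^14 + a^2*b^5*d^5*x₀^8*y₀^20*w₀^20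 + (-144)*a^2*b^5*c*d^2*N*x₀^10*y₀^22*z₀^6*w₀^10 + (-27)*a^2*b^5*c*d^4*x₀^8*y₀^20*z₀^4*w₀^16 + (-6)*a^2*b^5*c^2*d^3*x₀^8*y₀^20*z₀^8*w₀^12 + (202)*a^2*b^5*c^3*d^2*x₀^8*y₀^20*z₀^12*w₀^8 + a^2*b^6*d^4*x₀^8*y₀^24*w₀^16 + (-12)*a^2*b^6*c*d^3*x₀^8*y₀^24*z₀^4*w₀^12 + (54)*a^2*b^6*c^2*d^2*x₀^8*y₀^24*z₀^8*w₀^8 + (16)*a^3*c^4*d^3*N*x₀^14*y₀^2*z₀^18*w₀^14 + (-1)*a^3*c^4*d^5*x₀^12*z₀^16*w₀^20 + (-1)*a^3*c^5*d^4*x₀^12*z₀^20*w₀^16 + (-144)*a^3*b*c^2*d^4*N*x₀^14*y₀^6*z₀^10*w₀^18 + (-4)*a^3*b*c^3*d^5*x₀^12*y₀^4*z₀^12*w₀^20 + (-144)*a^3*b*c^4*d^2*N*x₀^14*y₀^6*z₀^18*w₀^10 + (76)*a^3*b*c^4*d^4*x₀^12*y₀^4*z₀^16*w₀^16 + (108)*a^3*b*c^5*d^3*x₀^12*y₀^4*z₀^20*w₀^12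 + (144)*a^3*b^2*c*d^4*N*x₀^14*y₀^10*z₀^6*w₀^18 + (48)*a^3*b^2*c^2*d^5*x₀^12*y₀^8*z₀^8*w₀^20 + (-96)*a^3*b^2*c^3*d^4*x₀^12*y₀^8*z₀^12*w₀^16 + (-336)*a^3*b^2*c^4*d*N*x₀^14*y₀^10*z₀^18*w₀^6 + (74)*a^3*b^2*c^4*d^3*x₀^12*y₀^8*z₀^16*w₀^12 + (202)*a^3*b^2*c^5*d^2*x₀^12*y₀^8*z₀^20*w₀^8 + (-4)*a^3*b^3*c*d^5*x₀^12*y₀^12*z₀^4*w₀^20 + (-96)*a^3*b^3*c^2*d^4*x₀^12*y₀^12*z₀^8*w₀^16 + (-2952)*a^3*b^3*c^3*d^3*x₀^12*y₀^12*z₀^12*w₀^12 + (-2740)*a^3*b^3*c^4*d^2*x₀^12*y₀^12*z₀^16*w₀^8 + (108)*a^3*b^3*c^5*d*x₀^12*y₀^12*z₀^20*w₀^4 + (-16)*a^3*b^4*d^3*N*x₀^14*y₀^18*z₀^2*w₀^14 + (144)*a^3*b^4*c*d^2*N*x₀^14*y₀^18*z₀^6*w₀^10 + (112)*a^3*b^4*c*d^4*x₀^12*y₀^16*z₀^4*w₀^16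 + (336)*a^3*b^4*c^2*d*N*x₀^14*y₀^18*z₀^10*w₀^6 + (560)*a^3*b^4*c^2*d^3*x₀^12*y₀^16*z₀^8*w₀^12 + (176)*a^3*b^4*c^3*d^2*x₀^12*y₀^16*z₀^12*w₀^8 + (756)*a^3*b^4*c^4*d*x₀^12*y₀^16*z₀^16*w₀^4 + (-1)*a^3*b^5*d^4*x₀^12*y₀^20*w₀^16 + (108)*a^3*b^5*c*d^3*x₀^12*y₀^20*z₀^4*w₀^12 + (202)*a^3*b^5*c^2*d^2*x₀^12*y₀^20*z₀^8*w₀^8 + (108)*a^3*b^5*c^3*d*x₀^12*y₀^20*z₀^12*w₀^4 + (-16)*a^4*c*d^5*N*x₀^18*y₀^2*z₀^6*w₀^22 + (16)*a^4*c^2*d^4*N*x₀^18*y₀^2*z₀^10*w₀^18 + (-16)*a^4*c^3*d^3*N*x₀^18*y₀^2*z₀^14*w₀^14 + a^4*c^4*d^4*x₀^16*z₀^16*w₀^16 + (16)*a^4*b*d^5*N*x₀^18*y₀^6*z₀^2*w₀^22 + (12)*a^4*b*c*d^6*x₀^16*y₀^4*z₀^4*w₀^24 + (-304)*a^4*b*c^2*d^3*N*x₀^18*y₀^6*z₀^10*w₀^14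 + (-12)*a^4*b*c^2*d^5*x₀^16*y₀^4*z₀^8*w₀^20 + (144)*a^4*b*c^3*d^2*N*x₀^18*y₀^6*z₀^14*w₀^10 + (112)*a^4*b*c^3*d^4*x₀^16*y₀^4*z₀^12*w₀^16 + (-108)*a^4*b*c^4*d^3*x₀^16*y₀^4*z₀^16*w₀^12 + (-16)*a^4*b^2*d^4*N*x₀^18*y₀^10*z₀^2*w₀^18 + (304)*a^4*b^2*c*d^3*N*x₀^18*y₀^10*z₀^6*w₀^14 + (-12)*a^4*b^2*c*d^5*x₀^16*y₀^8*z₀^4*w₀^20 + (336)*a^4*b^2*c^3*d*N*x₀^18*y₀^10*z₀^14*w₀^6 + (560)*a^4*b^2*c^3*d^3*x₀^16*y₀^8*z₀^12*w₀^12 + (374)*a^4*b^2*c^4*d^2*x₀^16*y₀^8*z₀^16*w₀^8 + (16)*a^4*b^3*d^3*N*x₀^18*y₀^14*z₀^2*w₀^14 + (-144)*a^4*b^3*c*d^2*N*x₀^18*y₀^14*z₀^6*w₀^10 + (112)*a^4*b^3*c*d^4*x₀^16*y₀^12*z₀^4*w₀^16 + (-336)*a^4*b^3*c^2*d*N*x₀^18*y₀^14*z₀^10*w₀^6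 + (560)*a^4*b^3*c^2*d^3*x₀^16*y₀^12*z₀^8*w₀^12 + (176)*a^4*b^3*c^3*d^2*x₀^16*y₀^12*z₀^12*w₀^8 + (756)*a^4*b^3*c^4*d*x₀^16*y₀^12*z₀^16*w₀^4 + a^4*b^4*d^4*x₀^16*y₀^16*w₀^16 + (-108)*a^4*b^4*c*d^3*x₀^16*y₀^16*z₀^4*w₀^12 + (374)*a^4*b^4*c^2*d^2*x₀^16*y₀^16*z₀^8*w₀^8 + (756)*a^4*b^4*c^3*d*x₀^16*y₀^16*z₀^12*w₀^4 + (81)*a^4*b^4*c^4*x₀^16*y₀^16*z₀^16 + a^5*d^7*x₀^20*w₀^28 + (-32)*a^5*c*d^4*N*x₀^22*y₀^2*z₀^6*w₀^18 + (-1)*a^5*c*d^6*x₀^20*z₀^4*w₀^24 + (16)*a^5*c^2*d^3*N*x₀^22*y₀^2*z₀^10*w₀^14 + a^5*c^2*d^5*x₀^20*z₀^8*w₀^20 + (-1)*a^5*c^3*d^4*x₀^20*z₀^12*w₀^16 + (32)*a^5*b*d^4*N*x₀^22*y₀^6*z₀^2*w₀^18 + (-1)*a^5*b*d^6*x₀^20*y₀^4*w₀^24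 + (38)*a^5*b*c*d^5*x₀^20*y₀^4*z₀^4*w₀^20 + (-144)*a^5*b*c^2*d^2*N*x₀^22*y₀^6*z₀^10*w₀^10 + (-27)*a^5*b*c^2*d^4*x₀^20*y₀^4*z₀^8*w₀^16 + (108)*a^5*b*c^3*d^3*x₀^20*y₀^4*z₀^12*w₀^12 + (-16)*a^5*b^2*d^3*N*x₀^22*y₀^10*z₀^2*w₀^14 + a^5*b^2*d^5*x₀^20*y₀^8*w₀^20 + (144)*a^5*b^2*c*d^2*N*x₀^22*y₀^10*z₀^6*w₀^10 + (-27)*a^5*b^2*c*d^4*x₀^20*y₀^8*z₀^4*w₀^16 + (-6)*a^5*b^2*c^2*d^3*x₀^20*y₀^8*z₀^8*w₀^12 + (202)*a^5*b^2*c^3*d^2*x₀^20*y₀^8*z₀^12*w₀^8 + (-1)*a^5*b^3*d^4*x₀^20*y₀^12*w₀^16 + (108)*a^5*b^3*c*d^3*x₀^20*y₀^12*z₀^4*w₀^12 + (202)*a^5*b^3*c^2*d^2*x₀^20*y₀^12*z₀^8*w₀^8 + (108)*a^5*b^3*c^3*d*x₀^20*y₀^12*z₀^12*w₀^4 + (3)*a^6*d^6*x₀^24*w₀^24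 + (-16)*a^6*c*d^3*N*x₀^26*y₀^2*z₀^6*w₀^14 + (-2)*a^6*c*d^5*x₀^24*z₀^4*w₀^20 + a^6*c^2*d^4*x₀^24*z₀^8*w₀^16 + (16)*a^6*b*d^3*N*x₀^26*y₀^6*z₀^2*w₀^14 + (-2)*a^6*b*d^5*x₀^24*y₀^4*w₀^20 + (38)*a^6*b*c*d^4*x₀^24*y₀^4*z₀^4*w₀^16 + (-12)*a^6*b*c^2*d^3*x₀^24*y₀^4*z₀^8*w₀^12 + a^6*b^2*d^4*x₀^24*y₀^8*w₀^16 + (-12)*a^6*b^2*c*d^3*x₀^24*y₀^8*z₀^4*w₀^12 + (54)*a^6*b^2*c^2*d^2*x₀^24*y₀^8*z₀^8*w₀^8 + (3)*a^7*d^5*x₀^28*w₀^20 + (-1)*a^7*c*d^4*x₀^28*z₀^4*w₀^16 + (-1)*a^7*b*d^4*x₀^28*y₀^4*w₀^16 + (12)*a^7*b*c*d^3*x₀^28*y₀^4*z₀^4*w₀^12 + a^8*d^4*x₀^32*w₀^16) * h
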